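/- For any positive parameters μ₁, μ₂, μ₃, the function g(x) = f(x) + (μ₂/μ₁)·f(2x) + (μ₃/μ₁)·f(π + x) has at least one and at most three zeros in (0, π). -/

import Mathlib

open Real Set

noncomputable def f (x : ℝ) : ℝ := Real.sin x * (1 - 1 / (8 * Real.sin (x/2)^3))

noncomputable def f1 (x : ℝ) : ℝ :=
  Real.cos x + (2 - Real.sin (x/2)^2) / (8 * Real.sin (x/2)^3)
noncomputable def f2 (x : ℝ) : ℝ :=
  -Real.sin x - Real.cos (x/2) * (6 - Real.sin (x/2)^2) / (16 * Real.sin (x/2)^4)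
noncomputable def f3 (x : ℝ) : ℝ :=
  -Real.cos x + (24 - 20 * Real.sin (x/2)^2 + Real.sin (x/2)^4) / (32 * Real.sin (x/2)^5)

lemma hasDerivAt_sin_half (x : ℝ) :
    HasDerivAt (fun y => Real.sin (y/2)) (Real.cos (x/2) * (1/2)) x := by
  simpa [Function.comp_def] using (Real.hasDerivAt_sin (x/2)).comp x ((hasDerivAt_id x).div_const 2)

lemma hasDerivAt_cos_half (x : ℝ) :
    HasDerivAt (fun y => Real.cos (y/2)) (-Real.sin (x/2) * (1/2)) x := by
  simpa [Function.comp_def] using (Real.hasDerivAt_cos (x/2)).comp x ((hasDerivAt_id x).div_const 2)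

noncomputable def F0 (x : ℝ) : ℝ := Real.sin x - Real.cos (x/2) / (4 * Real.sin (x/2)^2)

lemma f_eq {x : ℝ} (hx : Real.sin (x/2) ≠ 0) : f x = F0 x := by
  have hsin : Real.sin x = 2 * Real.sin (x/2) * Real.cos (x/2) := by
    rw [show x = 2 * (x/2) by ring, Real.sin_two_mul]; ring_nf
  unfold f F0
  rw [hsin]; field_simp; ring

lemma hasDerivAt_F0 {x : ℝ} (hx : Real.sin (x/2) ≠ 0) : HasDerivAt F0 (f1 x) x := by
  have hpyth := Real.sin_sq_add_cos_sq (x/2)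
  have hden : (4 * Real.sin (x/2)^2) ≠ 0 := by positivity
  have h1 : HasDerivAt (fun y => 4 * Real.sin (y/2)^2)
      (4 * (2 * Real.sin (x/2)^(2-1) * (Real.cos (x/2) * (1/2)))) x :=
    ((hasDerivAt_sin_half x).pow 2).const_mul 4
  have h2 := (hasDerivAt_cos_half x).div h1 hden
  have h3 := (Real.hasDerivAt_sin x).sub h2
  refine h3.congr_deriv ?_
  unfold f1
  field_simp
  linear_combination (16 * Real.sin (x/2)) * hpyth

lemma hasDerivAt_f1 {x : ℝ} (hx : Real.sin (x/2) ≠ 0) : HasDerivAt f1 (f2 x) x := by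
  have hpyth := Real.sin_sq_add_cos_sq (x/2)
  have hden : (8 * Real.sin (x/2)^3) ≠ 0 := by
    simp [pow_eq_zero_iff, hx]
  have hnum : HasDerivAt (fun y => 2 - Real.sin (y/2)^2)
      (0 - 2 * Real.sin (x/2)^(2-1) * (Real.cos (x/2) * (1/2))) x :=
    (hasDerivAt_const x 2).sub ((hasDerivAt_sin_half x).pow 2)
  have hdenD : HasDerivAt (fun y => 8 * Real.sin (y/2)^3)
      (8 * (3 * Real.sin (x/2)^(3-1) * (Real.cos (x/2) * (1/2)))) x :=
    ((hasDerivAt_sin_half x).pow 3).const_mul 8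
  have h3 := (Real.hasDerivAt_cos x).add (hnum.div hdenD hden)
  have h4 : f1 = fun y => Real.cos y + (2 - Real.sin (y/2)^2) / (8 * Real.sin (y/2)^3) := rfl
  rw [h4]
  refine h3.congr_deriv ?_
  unfold f2
  have hsin : Real.sin x = 2 * Real.sin (x/2) * Real.cos (x/2) := by
    rw [show x = 2 * (x/2) by ring, Real.sin_two_mul]; ring_nf
  rw [hsin]
  field_simp
  linear_combination (0 * Real.sin (x/2)) * hpyth

lemma hasDerivAt_f2 {x : ℝ} (hx : Real.sin (x/2) ≠ 0) : HasDerivAt f2 (f3 x) x := by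
  have hpyth := Real.sin_sq_add_cos_sq (x/2)
  have hden : (16 * Real.sin (x/2)^4) ≠ 0 := by
    simp [pow_eq_zero_iff, hx]
  have hnum : HasDerivAt (fun y => Real.cos (y/2) * (6 - Real.sin (y/2)^2))
      (-Real.sin (x/2) * (1/2) * (6 - Real.sin (x/2)^2) +
        Real.cos (x/2) * (0 - 2 * Real.sin (x/2)^(2-1) * (Real.cos (x/2) * (1/2)))) x :=
    (hasDerivAt_cos_half x).mul ((hasDerivAt_const x 6).sub ((hasDerivAt_sin_half x).pow 2))
  have hdenD : HasDerivAt (fun y => 16 * Real.sin (y/2)^4)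
      (16 * (4 * Real.sin (x/2)^(4-1) * (Real.cos (x/2) * (1/2)))) x :=
    ((hasDerivAt_sin_half x).pow 4).const_mul 16
  have h3 := ((Real.hasDerivAt_sin x).neg).sub (hnum.div hdenD hden)
  have h4 : f2 = fun y => -Real.sin y - Real.cos (y/2) * (6 - Real.sin (y/2)^2) / (16 * Real.sin (y/2)^4) := rfl
  rw [h4]
  refine h3.congr_deriv ?_
  unfold f3
  have hcos : Real.cos x = 1 - 2 * Real.sin (x/2)^2 := by
    have h := Real.cos_two_mul (x/2)
    rw [show (2:ℝ) * (x/2) = x by ring] at h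
    linarith [hpyth]
  rw [hcos]
  field_simp
  linear_combination (768 * Real.sin (x/2)^3 - 64 * Real.sin (x/2)^5) * hpyth

lemma hasDerivAt_f {x : ℝ} (hx : Real.sin (x/2) ≠ 0) : HasDerivAt f (f1 x) x := by
  have hopen : IsOpen {y : ℝ | Real.sin (y/2) ≠ 0} :=
    isOpen_ne.preimage (Real.continuous_sin.comp (continuous_id.div_const 2))
  have hev : f =ᶠ[nhds x] F0 := by
    filter_upwards [hopen.mem_nhds hx] with y hy using f_eq hy
  exact (hasDerivAt_F0 hx).congr_of_eventuallyEq hev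

lemma f3_pos {x : ℝ} (h0 : 0 < Real.sin (x/2)) : 0 < f3 x := by
  have h1 : Real.sin (x/2) ≤ 1 := Real.sin_le_one _
  have hcos : Real.cos x = 1 - 2 * Real.sin (x/2)^2 := by
    have h := Real.cos_two_mul (x/2)
    rw [show (2:ℝ) * (x/2) = x by ring] at h
    linarith [Real.sin_sq_add_cos_sq (x/2)]
  set s := Real.sin (x/2) with hs
  unfold f3
  rw [← hs, hcos]
  rw [show -(1 - 2*s^2) + (24 - 20*s^2 + s^4) / (32*s^5)
      = (64*s^7 - 32*s^5 + s^4 - 20*s^2 + 24) / (32*s^5) by field_simp; ring]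
  apply div_pos _ (by positivity)
  nlinarith [pow_pos h0 7, pow_pos h0 5, pow_pos h0 4, sq_nonneg (s^2 - 1), sq_nonneg s,
    (pow_le_one₀ h0.le h1 : s^5 ≤ 1), (pow_le_one₀ h0.le h1 : s^7 ≤ 1), sq_nonneg (s-1),
    sq_nonneg (s+1), (pow_le_one₀ h0.le h1 : s^2 ≤ 1)]

-- sign lemmas: f x < 0 when 0 < sin x? general:
lemma f_neg {x : ℝ} (h1 : 0 < Real.sin x) (h2 : 0 < Real.sin (x/2)) (h3 : Real.sin (x/2) < 1/2) :
    f x < 0 := by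
  unfold f
  have h4 : 8 * Real.sin (x/2)^3 < 1 := by
    nlinarith [pow_lt_pow_left₀ h3 h2.le (n := 3) (by norm_num)]
  have h5 : 0 < 8 * Real.sin (x/2)^3 := by positivity
  have : 1 < 1 / (8 * Real.sin (x/2)^3) := by
    rw [lt_div_iff₀ h5]; linarith
  nlinarith

lemma f_neg' {x : ℝ} (h1 : Real.sin x < 0) (h2 : 1/2 < Real.sin (x/2)) : f x < 0 := by
  unfold f
  have h4 : 1 < 8 * Real.sin (x/2)^3 := by
    nlinarith [pow_lt_pow_left₀ h2 (by norm_num : (0:ℝ) ≤ 1/2) (n := 3) (by norm_num)]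
  have : 1 / (8 * Real.sin (x/2)^3) < 1 := by
    rw [div_lt_one (by linarith)]; linarith
  nlinarith

lemma f_pos {x : ℝ} (h1 : 0 < Real.sin x) (h2 : 1/2 < Real.sin (x/2)) : f x > 0 := by
  unfold f
  have h4 : 1 < 8 * Real.sin (x/2)^3 := by
    nlinarith [pow_lt_pow_left₀ h2 (by norm_num : (0:ℝ) ≤ 1/2) (n := 3) (by norm_num)]
  have : 1 / (8 * Real.sin (x/2)^3) < 1 := by
    rw [div_lt_one (by linarith)]; linarith
  nlinarith

lemma f_pos' {x : ℝ} (h1 : Real.sin x < 0) (h2 : 0 < Real.sin (x/2)) (h3 : Real.sin (x/2) < 1/2) :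
    f x > 0 := by
  unfold f
  have h4 : 8 * Real.sin (x/2)^3 < 1 := by
    nlinarith [pow_lt_pow_left₀ h3 h2.le (n := 3) (by norm_num)]
  have h5 : 0 < 8 * Real.sin (x/2)^3 := by positivity
  have : 1 < 1 / (8 * Real.sin (x/2)^3) := by
    rw [lt_div_iff₀ h5]; linarith
  nlinarith

lemma sin_small {t : ℝ} (h0 : 0 < t) (h1 : t < π/6) : 0 < Real.sin t ∧ Real.sin t < 1/2 := by
  have hπ := Real.pi_pos
  constructor
  · exact Real.sin_pos_of_pos_of_lt_pi h0 (by linarith)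
  · calc Real.sin t < Real.sin (π/6) :=
          Real.sin_lt_sin_of_lt_of_le_pi_div_two (by linarith) (by linarith) h1
      _ = 1/2 := Real.sin_pi_div_six

lemma sin_big {t : ℝ} (h0 : π/6 < t) (h1 : t ≤ π/2) : 1/2 < Real.sin t := by
  have hπ := Real.pi_pos
  calc (1:ℝ)/2 = Real.sin (π/6) := Real.sin_pi_div_six.symm
    _ < Real.sin t := Real.sin_lt_sin_of_lt_of_le_pi_div_two (by linarith) h1 h0

lemma eval1 : f (π/6) < 0 := by
  have hπ := Real.pi_pos
  have h := sin_small (t := π/6/2) (by linarith) (by linarith)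
  exact f_neg (by rw [Real.sin_pi_div_six]; norm_num) h.1 h.2

lemma eval2 : f (π/3) = 0 := by
  unfold f
  rw [show (π/3)/2 = π/6 by ring, Real.sin_pi_div_six]
  norm_num

lemma eval3 : f (7*π/6) < 0 := by
  have hπ := Real.pi_pos
  apply f_neg'
  · rw [show 7*π/6 = π/6 + π by ring, Real.sin_add_pi, Real.sin_pi_div_six]; norm_num
  · rw [show (7*π/6)/2 = π - 5*π/12 by ring, Real.sin_pi_sub]
    exact sin_big (by linarith) (by linarith)

lemma eval4 : f (11*π/12) > 0 := by
  have hπ := Real.pi_pos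
  apply f_pos
  · exact Real.sin_pos_of_pos_of_lt_pi (by linarith) (by linarith)
  · rw [show (11*π/12)/2 = 11*π/24 by ring]
    exact sin_big (by linarith) (by linarith)

lemma eval5 : f (11*π/6) > 0 := by
  have hπ := Real.pi_pos
  apply f_pos'
  · rw [show 11*π/6 = -(π/6) + 2*π by ring, Real.sin_add_two_pi, Real.sin_neg,
      Real.sin_pi_div_six]
    norm_num
  · rw [show (11*π/6)/2 = π - π/12 by ring, Real.sin_pi_sub]
    exact (sin_small (by linarith) (by linarith)).1
  · rw [show (11*π/6)/2 = π - π/12 by ring, Real.sin_pi_sub]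
    exact (sin_small (by linarith) (by linarith)).2

lemma eval6 : f (23*π/12) > 0 := by
  have hπ := Real.pi_pos
  apply f_pos'
  · rw [show 23*π/12 = -(π/12) + 2*π by ring, Real.sin_add_two_pi, Real.sin_neg]
    have := (sin_small (t := π/12) (by linarith) (by linarith)).1
    linarith
  · rw [show (23*π/12)/2 = 23*π/24 by ring]
    exact Real.sin_pos_of_pos_of_lt_pi (by linarith) (by linarith)
  · rw [show (23*π/12)/2 = π - π/24 by ring, Real.sin_pi_sub]
    exact (sin_small (by linarith) (by linarith)).2

lemma hder_comp2 {F : ℝ → ℝ} {d x : ℝ} (h : HasDerivAt F d (2*x)) :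
    HasDerivAt (fun y => F (2*y)) (d * 2) x := by
  simpa [Function.comp_def] using h.comp x ((hasDerivAt_id x).const_mul 2)

lemma hder_compπ {F : ℝ → ℝ} {d x : ℝ} (h : HasDerivAt F d (π+x)) :
    HasDerivAt (fun y => F (π + y)) d x := by
  simpa [Function.comp_def] using h.comp x ((hasDerivAt_id x).const_add π)

lemma list_len4 {α : Type*} {l : List α} (h : l.length = 4) :
    ∃ p q r s, l = [p, q, r, s] := by
  rcases l with _ | ⟨p, l⟩; · simp at h
  rcases l with _ | ⟨q, l⟩; · simp at h
  rcases l with _ | ⟨r, l⟩; · simp at h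
  rcases l with _ | ⟨s, l⟩; · simp at h
  rcases l with _ | ⟨u, l⟩
  · exact ⟨p, q, r, s, rfl⟩
  · simp at h

theorem stmt14 (μ₁ μ₂ μ₃ : ℝ) (hμ1 : 0 < μ₁) (hμ2 : 0 < μ₂) (hμ3 : 0 < μ₃) :
    let g : ℝ → ℝ := fun x => f x + (μ₂/μ₁) * f (2*x) + (μ₃/μ₁) * f (π + x)
    (∃ x ∈ Ioo (0:ℝ) π, g x = 0) ∧
    (∃ a b c : ℝ, ∀ x ∈ Ioo (0:ℝ) π, g x = 0 → x = a ∨ x = b ∨ x = c) := by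
  intro g
  have hπ := Real.pi_pos
  have hμ : 0 < μ₂/μ₁ := div_pos hμ2 hμ1
  have hν : 0 < μ₃/μ₁ := div_pos hμ3 hμ1
  -- nonvanishing facts
  have key : ∀ x ∈ Ioo (0:ℝ) π, 0 < Real.sin (x/2) ∧ 0 < Real.sin ((2*x)/2) ∧
      0 < Real.sin ((π+x)/2) := by
    intro x hx
    refine ⟨Real.sin_pos_of_pos_of_lt_pi (by linarith [hx.1]) (by linarith [hx.2]),
      ?_, Real.sin_pos_of_pos_of_lt_pi (by linarith [hx.1]) (by linarith [hx.2])⟩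
    rw [show (2*x)/2 = x by ring]
    exact Real.sin_pos_of_pos_of_lt_pi hx.1 hx.2
  set G1 : ℝ → ℝ := fun x => f1 x + μ₂/μ₁ * (f1 (2*x) * 2) + μ₃/μ₁ * f1 (π+x) with hG1def
  set G2 : ℝ → ℝ := fun x => f2 x + μ₂/μ₁ * (f2 (2*x) * 2 * 2) + μ₃/μ₁ * f2 (π+x) with hG2def
  set G3 : ℝ → ℝ := fun x => f3 x + μ₂/μ₁ * (f3 (2*x) * 2 * 2 * 2) + μ₃/μ₁ * f3 (π+x) with hG3def
  have hg1 : ∀ x ∈ Ioo (0:ℝ) π, HasDerivAt g (G1 x) x := by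
    intro x hx
    obtain ⟨h1, h2, h3⟩ := key x hx
    exact ((hasDerivAt_f h1.ne').add
      (((hder_comp2 (hasDerivAt_f h2.ne')).const_mul (μ₂/μ₁)))).add
      ((hder_compπ (hasDerivAt_f h3.ne')).const_mul (μ₃/μ₁))
  have hg2 : ∀ x ∈ Ioo (0:ℝ) π, HasDerivAt G1 (G2 x) x := by
    intro x hx
    obtain ⟨h1, h2, h3⟩ := key x hx
    have := ((hasDerivAt_f1 h1.ne').add
      ((((hder_comp2 (hasDerivAt_f1 h2.ne')).mul_const 2)).const_mul (μ₂/μ₁))).add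
      ((hder_compπ (hasDerivAt_f1 h3.ne')).const_mul (μ₃/μ₁))
    simpa [hG1def, hG2def, mul_comm, mul_assoc, mul_left_comm, Pi.add_def] using this
  have hg3 : ∀ x ∈ Ioo (0:ℝ) π, HasDerivAt G2 (G3 x) x := by
    intro x hx
    obtain ⟨h1, h2, h3⟩ := key x hx
    have := ((hasDerivAt_f2 h1.ne').add
      (((((hder_comp2 (hasDerivAt_f2 h2.ne')).mul_const 2).mul_const 2)).const_mul (μ₂/μ₁))).add
      ((hder_compπ (hasDerivAt_f2 h3.ne')).const_mul (μ₃/μ₁))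
    simpa [hG2def, hG3def, mul_comm, mul_assoc, mul_left_comm, Pi.add_def] using this
  have hG3pos : ∀ x ∈ Ioo (0:ℝ) π, 0 < G3 x := by
    intro x hx
    obtain ⟨h1, h2, h3⟩ := key x hx
    have p1 := f3_pos h1
    have p2 := f3_pos h2
    have p3 := f3_pos h3
    have : 0 < μ₂/μ₁ * (f3 (2*x) * 2 * 2 * 2) := by positivity
    have : 0 < μ₃/μ₁ * f3 (π+x) := by positivity
    simp only [hG3def]
    positivity
  -- Rolle step
  have step : ∀ (F F' : ℝ → ℝ), (∀ y ∈ Ioo (0:ℝ) π, HasDerivAt F (F' y) y) →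
      ∀ a b, a ∈ Ioo (0:ℝ) π → b ∈ Ioo (0:ℝ) π → a < b → F a = 0 → F b = 0 →
      ∃ c ∈ Ioo (0:ℝ) π, a < c ∧ c < b ∧ F' c = 0 := by
    intro F F' hF a b ha hb hab h0a h0b
    have hsub : Icc a b ⊆ Ioo (0:ℝ) π := fun y hy =>
      ⟨lt_of_lt_of_le ha.1 hy.1, lt_of_le_of_lt hy.2 hb.2⟩
    have hcont : ContinuousOn F (Icc a b) := fun y hy =>
      (hF y (hsub hy)).continuousAt.continuousWithinAt
    obtain ⟨c, hc, hc0⟩ := exists_hasDerivAt_eq_zero hab hcont (h0a.trans h0b.symm)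
      (fun y hy => hF y (hsub (Ioo_subset_Icc_self hy)))
    exact ⟨c, hsub (Ioo_subset_Icc_self hc), hc.1, hc.2, hc0⟩
  -- no four zeros
  have main : ∀ x1 x2 x3 x4 : ℝ, x1 ∈ Ioo (0:ℝ) π → x2 ∈ Ioo (0:ℝ) π →
      x3 ∈ Ioo (0:ℝ) π → x4 ∈ Ioo (0:ℝ) π → x1 < x2 → x2 < x3 → x3 < x4 →
      g x1 = 0 → g x2 = 0 → g x3 = 0 → g x4 = 0 → False := by
    intro x1 x2 x3 x4 h1 h2 h3 h4 h12 h23 h34 e1 e2 e3 e4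
    obtain ⟨y1, hy1, hy1a, hy1b, hy1z⟩ := step g G1 hg1 x1 x2 h1 h2 h12 e1 e2
    obtain ⟨y2, hy2, hy2a, hy2b, hy2z⟩ := step g G1 hg1 x2 x3 h2 h3 h23 e2 e3
    obtain ⟨y3, hy3, hy3a, hy3b, hy3z⟩ := step g G1 hg1 x3 x4 h3 h4 h34 e3 e4
    obtain ⟨z1, hz1, hz1a, hz1b, hz1z⟩ := step G1 G2 hg2 y1 y2 hy1 hy2 (by linarith) hy1z hy2z
    obtain ⟨z2, hz2, hz2a, hz2b, hz2z⟩ := step G1 G2 hg2 y2 y3 hy2 hy3 (by linarith) hy2z hy3z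
    obtain ⟨w, hw, hwa, hwb, hwz⟩ := step G2 G3 hg3 z1 z2 hz1 hz2 (by linarith) hz1z hz2z
    exact absurd hwz (hG3pos w hw).ne'
  constructor
  · -- existence via IVT
    have ha : (π/6 : ℝ) ∈ Ioo (0:ℝ) π := ⟨by linarith, by linarith⟩
    have hb : (11*π/12 : ℝ) ∈ Ioo (0:ℝ) π := ⟨by linarith, by linarith⟩
    have hab : (π/6 : ℝ) < 11*π/12 := by linarith
    have hga : g (π/6) < 0 := by
      show f (π/6) + μ₂/μ₁ * f (2*(π/6)) + μ₃/μ₁ * f (π + π/6) < 0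
      rw [show 2*(π/6) = π/3 by ring, show π + π/6 = 7*π/6 by ring, eval2]
      have := eval1; have := eval3
      nlinarith
    have hgb : g (11*π/12) > 0 := by
      show f (11*π/12) + μ₂/μ₁ * f (2*(11*π/12)) + μ₃/μ₁ * f (π + 11*π/12) > 0
      rw [show 2*(11*π/12) = 11*π/6 by ring, show π + 11*π/12 = 23*π/12 by ring]
      have := eval4; have := eval5; have := eval6
      nlinarith
    have hsub : Icc (π/6 : ℝ) (11*π/12) ⊆ Ioo (0:ℝ) π := fun y hy =>
      ⟨lt_of_lt_of_le ha.1 hy.1, lt_of_le_of_lt hy.2 hb.2⟩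
    have hcont : ContinuousOn g (Icc (π/6 : ℝ) (11*π/12)) := fun y hy =>
      (hg1 y (hsub hy)).continuousAt.continuousWithinAt
    have h0 : (0:ℝ) ∈ Icc (g (π/6)) (g (11*π/12)) := ⟨hga.le, hgb.le⟩
    obtain ⟨x, hx, hgx⟩ := intermediate_value_Icc hab.le hcont h0
    exact ⟨x, hsub hx, hgx⟩
  · -- at most three
    by_contra hcon
    push_neg at hcon
    obtain ⟨x1, hx1, e1, _⟩ := hcon 0 0 0
    obtain ⟨x2, hx2, e2, h21, -, -⟩ := hcon x1 x1 x1
    obtain ⟨x3, hx3, e3, h31, h32, -⟩ := hcon x1 x2 x2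
    obtain ⟨x4, hx4, e4, h41, h42, h43⟩ := hcon x1 x2 x3
    set t : Finset ℝ := {x1, x2, x3, x4} with ht
    have n3 : x3 ∉ ({x4} : Finset ℝ) := by
      simp only [Finset.mem_singleton]
      exact fun h => h43 h.symm
    have n2 : x2 ∉ ({x3, x4} : Finset ℝ) := by
      simp only [Finset.mem_insert, Finset.mem_singleton]
      push_neg
      exact ⟨fun h => h32 h.symm, fun h => h42 h.symm⟩
    have n1 : x1 ∉ ({x2, x3, x4} : Finset ℝ) := by
      simp only [Finset.mem_insert, Finset.mem_singleton]
      push_neg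
      exact ⟨fun h => h21 h.symm, fun h => h31 h.symm, fun h => h41 h.symm⟩
    have htc : t.card = 4 := by
      rw [ht, Finset.card_insert_of_notMem n1, Finset.card_insert_of_notMem n2,
        Finset.card_insert_of_notMem n3, Finset.card_singleton]
    have hmemP : ∀ z ∈ t, z ∈ Ioo (0:ℝ) π ∧ g z = 0 := by
      intro z hz
      rw [ht] at hz
      simp only [Finset.mem_insert, Finset.mem_singleton] at hz
      rcases hz with h | h | h | h <;> rw [h] <;> exact ⟨by assumption, by assumption⟩
    have hsort := (Finset.sortedLT_sort t).pairwise
    have hlen : (Finset.sort t).length = 4 := by rw [Finset.length_sort, htc]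
    obtain ⟨p, q, r, s, hpqrs⟩ := list_len4 hlen
    rw [hpqrs] at hsort
    simp only [List.pairwise_cons, List.mem_cons, List.mem_singleton, List.not_mem_nil,
      List.Pairwise.nil, List.mem_nil_iff] at hsort
    have hmem' : ∀ z ∈ [p,q,r,s], z ∈ Ioo (0:ℝ) π ∧ g z = 0 := by
      intro z hz
      apply hmemP
      rw [← Finset.mem_sort (· ≤ ·), hpqrs]
      exact hz
    have hp := hmem' p (by simp); have hq := hmem' q (by simp)
    have hr := hmem' r (by simp); have hs := hmem' s (by simp)
    exact main p q r s hp.1 hq.1 hr.1 hs.1 (by tauto) (by tauto) (by tauto)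
      hp.2 hq.2 hr.2 hs.2
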